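/- arXiv:2408.04986 — 5 statements merged into one kernel-verified Lean document; each statement's English description precedes it below -/
import Mathlib

section
/- Let (u_n) be defined by u_0 = P, u_1 = Q, u_n = A u_{n-1} − B u_{n-2}, with B ≠ 0, P ≠ 0, Q ≠ 0, and suppose u_k = 0 for some k ≥ 2 with U_{k-1} ≠ 0 (where U is the first-kind Lucas sequence for A, B). Then P · B · U_{k−1} = Q · U_k, i.e. P/Q = U_k/(B U_{k−1}). -/
/-- If a BRIG sequence with nonzero initial values has u_k = 0, then P/Q = U_k/(B U_{k-1}). -/
theorem brig_zero_determines_ratio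
    (A B P Q : ℤ) (u U : ℕ → ℤ) (k : ℕ)
    (hB : B ≠ 0) (hP : P ≠ 0) (hQ : Q ≠ 0)
    (hu0 : u 0 = P) (hu1 : u 1 = Q)
    (hrec : ∀ n : ℕ, u (n + 2) = A * u (n + 1) - B * u n)
    (hU0 : U 0 = 0) (hU1 : U 1 = 1)
    (hUrec : ∀ m : ℕ, U (m + 2) = A * U (m + 1) - B * U m)
    (hk : 2 ≤ k) (huk : u k = 0) (hUk1 : U (k - 1) ≠ 0) :
    P * (B * U (k - 1)) = Q * U k := by
  have key : ∀ n : ℕ, u (n + 1) = Q * U (n + 1) - B * P * U n ∧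
      u (n + 2) = Q * U (n + 2) - B * P * U (n + 1) := by
    intro n
    induction n with
    | zero =>
      constructor
      · simp [hu1, hU1, hU0]
      · rw [hrec 0, hUrec 0]; rw [hu0, hu1, hU0, hU1]; ring
    | succ m ih =>
      refine ⟨ih.2, ?_⟩
      rw [hrec (m + 1), hUrec (m + 1), ih.1, ih.2]; linear_combination (B*P) * hUrec m
  obtain ⟨m, rfl⟩ : ∃ m, k = m + 1 := ⟨k - 1, by omega⟩
  have := (key m).1
  rw [huk] at this
  simp only [Nat.add_sub_cancel]
  linarith
end

section
/- Let p be a prime with v_p(A) ≥ v_p(B) = 1 (where v_p denotes p-adic valuation) and let (U_m) be the Lucas sequence of the first kind for A, B. Then for all n ≥ 0: v_p(U_{2n+1}) = n and v_p(U_{2n}) ≥ n. -/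
/-- If v_p(A) ≥ v_p(B) = 1, then v_p(U_{2n+1}) = n and v_p(U_{2n}) ≥ n. -/
theorem lucas_padic_valuation
    (A B : ℤ) (p : ℕ) (hp : p.Prime)
    (hpA : (p : ℤ) ∣ A) (hpB : (p : ℤ) ∣ B) (hp2B : ¬ (p : ℤ) ^ 2 ∣ B)
    (U : ℕ → ℤ)
    (hU0 : U 0 = 0) (hU1 : U 1 = 1)
    (hUrec : ∀ m : ℕ, U (m + 2) = A * U (m + 1) - B * U m) :
    ∀ n : ℕ,
      ((p : ℤ) ^ n ∣ U (2 * n + 1) ∧ ¬ (p : ℤ) ^ (n + 1) ∣ U (2 * n + 1))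
      ∧ (p : ℤ) ^ n ∣ U (2 * n) := by
  obtain ⟨a, ha⟩ := hpA
  obtain ⟨b, hb⟩ := hpB
  have hpZ : Prime ((p : ℤ)) := Nat.prime_iff_prime_int.mp hp
  have hpb : ¬ (p : ℤ) ∣ b := by
    intro ⟨c, hc⟩
    exact hp2B ⟨c, by rw [hb, hc]; ring⟩
  intro n
  induction n with
  | zero =>
    refine ⟨⟨one_dvd _, ?_⟩, one_dvd _⟩
    simpa [hU1] using hpZ.not_dvd_one
  | succ n ih =>
    obtain ⟨⟨h1, h2⟩, h3⟩ := ih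
    have heq1 : U (2 * (n + 1)) = A * U (2 * n + 1) - B * U (2 * n) := by
      rw [show 2 * (n + 1) = 2 * n + 2 by ring, hUrec (2 * n)]
    have heq2 : U (2 * (n + 1) + 1) = A * U (2 * (n + 1)) - B * U (2 * n + 1) := by
      rw [show 2 * (n + 1) + 1 = (2 * n + 1) + 2 by ring, hUrec (2 * n + 1),
        show 2 * n + 1 + 1 = 2 * (n + 1) by ring]
    have heven : (p : ℤ) ^ (n + 1) ∣ U (2 * (n + 1)) := by
      rw [heq1]
      obtain ⟨u, hu⟩ := h1
      obtain ⟨v, hv⟩ := h3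
      exact ⟨a * u - b * v, by rw [ha, hb, hu, hv]; ring⟩
    refine ⟨⟨?_, ?_⟩, heven⟩
    · rw [heq2]
      obtain ⟨w, hw⟩ := heven
      obtain ⟨u, hu⟩ := h1
      exact ⟨A * w - b * u, by rw [hb, hu, hw]; ring⟩
    · intro hdvd
      have hA2 : (p : ℤ) ^ (n + 2) ∣ A * U (2 * (n + 1)) := by
        obtain ⟨w, hw⟩ := heven
        exact ⟨a * w, by rw [ha, hw]; ring⟩
      have hB : (p : ℤ) ^ (n + 2) ∣ B * U (2 * n + 1) := by
        have : (p : ℤ) ^ (n + 2) ∣ A * U (2 * (n + 1)) - U (2 * (n + 1) + 1) := by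
          exact dvd_sub hA2 hdvd
        have heq3 : A * U (2 * (n + 1)) - U (2 * (n + 1) + 1) = B * U (2 * n + 1) := by
          rw [heq2]; ring
        rwa [heq3] at this
      have : (p : ℤ) ^ (n + 1) ∣ b * U (2 * n + 1) := by
        obtain ⟨w, hw⟩ := hB
        rw [hb] at hw
        refine (mul_dvd_mul_iff_left (a := (p:ℤ)) hpZ.ne_zero).mp ?_
        exact ⟨w, by linear_combination hw⟩
      exact h2 (hpZ.pow_dvd_of_dvd_mul_left _ hpb this)
end

section
/- Let A, B be integers such that no prime p satisfies p ∣ A and p² ∣ B simultaneously (i.e. the pair (A,B) is 'reduced'), and let g = gcd(A, B). Let (U_m) be the Lucas sequence of the first kind for A, B. Then for all n ≥ 0, gcd(U_{2n}, U_{2n+1}) = g^n and gcd(U_{2n+1}, U_{2n+2}) = g^n. -/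
/-- Auxiliary pair sequence: `U (2n) = g^n * (lucXY g a b n).1`,
`U (2n+1) = g^n * (lucXY g a b n).2` when `A = g*a`, `B = g*b`. -/
def lucXY (g a b : ℤ) : ℕ → ℤ × ℤ
  | 0 => (0, 1)
  | n + 1 =>
    let p := lucXY g a b n
    let x := a * p.2 - b * p.1
    (x, g * a * x - b * p.2)

/-- If no prime p satisfies p ∣ A and p² ∣ B, then consecutive Lucas terms have
gcd(U_{2n}, U_{2n+1}) = gcd(U_{2n+1}, U_{2n+2}) = g^n where g = gcd(A,B). -/
theorem lucas_consecutive_gcd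
    (A B : ℤ)
    (hred : ∀ q : ℕ, q.Prime → (q : ℤ) ∣ A → ¬ (q : ℤ) ^ 2 ∣ B)
    (U : ℕ → ℤ)
    (hU0 : U 0 = 0) (hU1 : U 1 = 1)
    (hUrec : ∀ m : ℕ, U (m + 2) = A * U (m + 1) - B * U m)
    (hnz : ∀ m : ℕ, 1 ≤ m → U m ≠ 0) :
    ∀ n : ℕ,
      Int.gcd (U (2 * n)) (U (2 * n + 1)) = (Int.gcd A B) ^ n
      ∧ Int.gcd (U (2 * n + 1)) (U (2 * n + 2)) = (Int.gcd A B) ^ n := by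
  set G : ℕ := Int.gcd A B with hG
  set gZ : ℤ := (G : ℤ) with hgZ
  obtain ⟨a, hA⟩ : gZ ∣ A := Int.gcd_dvd_left A B
  obtain ⟨b, hB⟩ : gZ ∣ B := Int.gcd_dvd_right A B
  -- A and b are coprime, by the reduced hypothesis
  have hAb : IsCoprime A b := by
    rw [Int.isCoprime_iff_gcd_eq_one]
    by_contra h
    obtain ⟨q, hq, hqd⟩ := Nat.exists_prime_and_dvd h
    have hqd' : (q : ℤ) ∣ (Int.gcd A b : ℤ) := Int.natCast_dvd_natCast.mpr hqd
    have hqA : (q : ℤ) ∣ A := hqd'.trans (Int.gcd_dvd_left A b)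
    have hqb : (q : ℤ) ∣ b := hqd'.trans (Int.gcd_dvd_right A b)
    have hqB : (q : ℤ) ∣ B := by rw [hB]; exact Dvd.dvd.mul_left hqb gZ
    have hqG : (q : ℤ) ∣ gZ := Int.natCast_dvd_natCast.mpr (Int.dvd_gcd hqA hqB)
    have : (q : ℤ) ^ 2 ∣ B := by rw [hB, sq]; exact mul_dvd_mul hqG hqb
    exact hred q hq hqA this
  have hgb : IsCoprime gZ b := by
    have := hAb; rw [hA] at this; exact this.of_isCoprime_of_dvd_left (dvd_mul_right _ _)
  have hab : IsCoprime a b := by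
    have := hAb; rw [hA] at this; exact this.of_isCoprime_of_dvd_left (dvd_mul_left _ _)
  -- Representation lemma
  have hrep : ∀ n : ℕ, U (2 * n) = gZ ^ n * (lucXY gZ a b n).1
      ∧ U (2 * n + 1) = gZ ^ n * (lucXY gZ a b n).2 := by
    intro n
    induction n with
    | zero => simp [lucXY, hU0, hU1]
    | succ n ih =>
      obtain ⟨h1, h2⟩ := ih
      have e2 : 2 * (n + 1) = 2 * n + 2 := by ring
      have r1 := hUrec (2 * n)
      have r2 := hUrec (2 * n + 1)
      constructor
      · rw [e2, r1, h1, h2, hA, hB]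
        simp only [lucXY]
        ring
      · rw [e2, r2, r1, h1, h2, hA, hB]
        simp only [lucXY]
        ring
  -- Coprimality invariant
  have hinv : ∀ n : ℕ, IsCoprime (lucXY gZ a b n).2 b
      ∧ IsCoprime (lucXY gZ a b n).2 gZ
      ∧ IsCoprime (lucXY gZ a b n).1 (lucXY gZ a b n).2 := by
    intro n
    induction n with
    | zero =>
      refine ⟨isCoprime_one_left, isCoprime_one_left, ?_⟩
      exact isCoprime_one_right
    | succ n ih =>
      obtain ⟨ihb, ihg, ihxy⟩ := ih
      set x := (lucXY gZ a b n).1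
      set y := (lucXY gZ a b n).2
      have hx' : (lucXY gZ a b (n + 1)).1 = a * y - b * x := by simp [lucXY, x, y]
      have hy' : (lucXY gZ a b (n + 1)).2 = gZ * a * (a * y - b * x) - b * y := by
        simp [lucXY, x, y]
      set x' : ℤ := a * y - b * x with hx'd
      -- x' coprime to b
      have hx'b : IsCoprime x' b := by
        have : x' = a * y + b * (-x) := by rw [hx'd]; ring
        rw [this]
        exact (hab.mul_left ihb).add_mul_left_left (-x)
      -- x' coprime to y
      have hx'y : IsCoprime x' y := by
        have : x' = -(b * x) + y * a := by rw [hx'd]; ring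
        rw [this]
        exact ((ihb.symm.mul_left ihxy).neg_left).add_mul_left_left a
      refine ⟨?_, ?_, ?_⟩
      · rw [hy']
        have : gZ * a * (a * y - b * x) - b * y = (gZ * a) * x' + b * (-y) := by
          rw [hx'd]; ring
        rw [this]
        exact (((hgb.mul_left hab).mul_left hx'b)).add_mul_left_left (-y)
      · rw [hy']
        have : gZ * a * (a * y - b * x) - b * y = -(b * y) + gZ * (a * x') := by
          rw [hx'd]; ring
        rw [this]
        exact ((hgb.symm.mul_left ihg).neg_left).add_mul_left_left (a * x')
      · rw [hx', hy']
        have : gZ * a * (a * y - b * x) - b * y = -(b * y) + x' * (gZ * a) := by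
          rw [hx'd]; ring
        rw [this]
        exact ((hx'b.mul_right hx'y).neg_right).add_mul_left_right (gZ * a)
  intro n
  obtain ⟨h1, h2⟩ := hrep n
  obtain ⟨hb', hg', hxy⟩ := hinv n
  set x := (lucXY gZ a b n).1
  set y := (lucXY gZ a b n).2
  constructor
  · rw [h1, h2, Int.gcd_mul_left, Int.isCoprime_iff_gcd_eq_one.mp hxy]
    simp [hgZ, Int.natAbs_pow]
  · have h3 : U (2 * n + 2) = gZ ^ n * (gZ * (lucXY gZ a b (n + 1)).1) := by
      have := (hrep (n + 1)).1
      rw [show 2 * (n + 1) = 2 * n + 2 from by ring] at this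
      rw [this, pow_succ]; ring
    have hx'' : (lucXY gZ a b (n + 1)).1 = a * y - b * x := by simp [lucXY, x, y]
    have hyx' : IsCoprime y (lucXY gZ a b (n + 1)).1 := by
      rw [hx'', show a * y - b * x = -(b * x) + y * a from by ring]
      exact ((hb'.mul_right hxy.symm).neg_right).add_mul_left_right a
    have : IsCoprime y (gZ * (lucXY gZ a b (n + 1)).1) := hg'.mul_right hyx'
    rw [h2, h3, Int.gcd_mul_left, Int.isCoprime_iff_gcd_eq_one.mp this]
    simp [hgZ, Int.natAbs_pow]
end

section
/- For integers A, B, define P_2 = A, Q_2 = B, and recursively P_{m+1} = A P_m − Q_m, Q_{m+1} = B P_m for m ≥ 2. Then for each m ≥ 2, the sequence (u_n) with u_0 = P_m, u_1 = Q_m and u_n = A u_{n-1} − B u_{n-2} satisfies u_m = 0. -/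
/-- Initial values P_m, Q_m defined by P_2 = A, Q_2 = B, P_{m+1} = A P_m - Q_m,
Q_{m+1} = B P_m produce BRIG sequences with u_m = 0. -/
theorem brig_initial_values_with_zero
    (A B : ℤ) (P Q : ℕ → ℤ) (u : ℕ → ℕ → ℤ)
    (hP2 : P 2 = A) (hQ2 : Q 2 = B)
    (hPrec : ∀ m : ℕ, 2 ≤ m → P (m + 1) = A * P m - Q m)
    (hQrec : ∀ m : ℕ, 2 ≤ m → Q (m + 1) = B * P m)
    (hu0 : ∀ m : ℕ, u m 0 = P m) (hu1 : ∀ m : ℕ, u m 1 = Q m)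
    (hrec : ∀ m n : ℕ, u m (n + 2) = A * u m (n + 1) - B * u m n) :
    ∀ m : ℕ, 2 ≤ m → u m m = 0 := by
  intro m hm
  induction m with
  | zero => omega
  | succ k ih =>
    rcases Nat.lt_or_ge k 2 with h | h
    · have hk : k = 1 := by omega
      subst hk
      have := hrec 2 0
      rw [hu1, hu0, hP2, hQ2] at this
      rw [this]; ring
    · have h1 : u (k + 1) 1 = B * u k 0 := by
        rw [hu1, hQrec k h, hu0]
      have h2 : u (k + 1) 2 = B * u k 1 := by
        rw [hrec (k + 1) 0, hu1, hu0, hQrec k h, hPrec k h, hu1]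
        ring
      have key : ∀ n, u (k + 1) (n + 1) = B * u k n ∧
          u (k + 1) (n + 2) = B * u k (n + 1) := by
        intro n
        induction n with
        | zero => exact ⟨h1, h2⟩
        | succ j ihj =>
          refine ⟨ihj.2, ?_⟩
          rw [hrec (k + 1) (j + 1), hrec k j, ihj.1, ihj.2]
          ring
      rw [(key k).1, ih h, mul_zero]
end

section
/- Let A, B, P, Q be integers with A > 0, A² > 4B, and set D = √(A² − 4B), α = (A+D)/2, β = (A−D)/2, a = (Q − Pβ)/D, b = (Q − Pα)/D. If Q² − APQ + BP² ≠ 0 then |a| ≥ 2 / (D(2|Q| + |P|(A+D))). -/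
/-- Lower bound for |a| in the real case. -/
theorem lower_bound_coefficient_a
    (A B P Q : ℤ) (hA : 0 < A) (hAB : 4 * B < A ^ 2)
    (D α β a : ℝ)
    (hD : D = Real.sqrt ((A : ℝ) ^ 2 - 4 * B))
    (hα : α = ((A : ℝ) + D) / 2) (hβ : β = ((A : ℝ) - D) / 2)
    (ha : a = ((Q : ℝ) - P * β) / D)
    (hnz : Q ^ 2 - A * P * Q + B * P ^ 2 ≠ 0) :
    2 / (D * (2 * |(Q : ℝ)| + |(P : ℝ)| * ((A : ℝ) + D))) ≤ |a| := by
  have h2 : (0:ℝ) < (A:ℝ) ^ 2 - 4 * B := by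
    have : (4*B : ℝ) < (A:ℝ)^2 := by exact_mod_cast hAB
    linarith
  have hDpos : 0 < D := by rw [hD]; exact Real.sqrt_pos.mpr h2
  have hDsq : D ^ 2 = (A:ℝ) ^ 2 - 4 * B := by
    rw [hD, Real.sq_sqrt h2.le]
  have hApos : (0:ℝ) < A := by exact_mod_cast hA
  have hprod : ((Q:ℝ) - P * α) * ((Q:ℝ) - P * β)
      = (Q:ℝ)^2 - A * P * Q + B * P^2 := by
    rw [hα, hβ]
    linear_combination (-(P:ℝ)^2/4) * hDsq
  have h1 : (1:ℝ) ≤ |(Q:ℝ)^2 - A * P * Q + B * P^2| := by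
    have := Int.one_le_abs hnz
    have : (1:ℝ) ≤ |((Q ^ 2 - A * P * Q + B * P ^ 2 : ℤ) : ℝ)| := by
      rw [← Int.cast_abs]; exact_mod_cast this
    push_cast at this
    exact this
  have h1' : (1:ℝ) ≤ |(Q:ℝ) - P * α| * |(Q:ℝ) - P * β| := by
    rw [← abs_mul, hprod]; exact h1
  -- bound on |Q - Pα|
  have hαval : α = ((A:ℝ) + D)/2 := hα
  have hbnd : |(Q:ℝ) - P * α| ≤ (2 * |(Q:ℝ)| + |(P:ℝ)| * ((A:ℝ) + D)) / 2 := by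
    calc |(Q:ℝ) - P * α| ≤ |(Q:ℝ)| + |(P:ℝ) * α| := by
          rw [sub_eq_add_neg]; exact le_trans (abs_add_le _ _) (by rw [abs_neg])
    _ = |(Q:ℝ)| + |(P:ℝ)| * α := by
        rw [abs_mul, abs_of_pos (show (0:ℝ) < α by rw [hα]; positivity)]
    _ = (2 * |(Q:ℝ)| + |(P:ℝ)| * ((A:ℝ) + D)) / 2 := by rw [hα]; ring
  have hM : 0 < 2 * |(Q:ℝ)| + |(P:ℝ)| * ((A:ℝ) + D) := by
    rcases lt_or_eq_of_le (by positivity : (0:ℝ) ≤ 2 * |(Q:ℝ)| + |(P:ℝ)| * ((A:ℝ) + D)) with h | h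
    · exact h
    · exfalso
      have hQ0 : |(Q:ℝ)| = 0 := by nlinarith [abs_nonneg ((Q:ℝ)), abs_nonneg ((P:ℝ))]
      have hP0 : |(P:ℝ)| = 0 := by nlinarith [abs_nonneg ((Q:ℝ)), abs_nonneg ((P:ℝ))]
      have : (Q:ℝ) = 0 := abs_eq_zero.mp hQ0
      have hQz : Q = 0 := by exact_mod_cast this
      have : (P:ℝ) = 0 := abs_eq_zero.mp hP0
      have hPz : P = 0 := by exact_mod_cast this
      apply hnz; rw [hQz, hPz]; ring
  have hβb : (0:ℝ) ≤ |(Q:ℝ) - P * β| := abs_nonneg _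
  rw [ha, abs_div, abs_of_pos hDpos, div_le_div_iff₀ (by positivity) hDpos]
  nlinarith [mul_le_mul_of_nonneg_left hbnd hβb]
end
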